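/- Let m, n ≥ 1, let Q be an m×m positive-definite Hermitian complex matrix, let Q̃_Z be an n×n positive-definite Hermitian complex matrix, and let H̃ be an n×m complex matrix. Then for every n×m complex matrix H and every n×n positive-definite Hermitian complex matrix Q_Z, ln det(I + Q_Z⁻¹ H Q H†) + tr( (Q̃_Z + H̃ Q H̃†)(Q_Z + H Q H†)⁻¹ ) − tr( (Q̃_Z + (H̃ − H) Q (H̃ − H)†) Q_Z⁻¹ ) ≤ ln det(I + Q̃_Z⁻¹ H̃ Q H̃†), and equality holds when H = H̃ and Q_Z = Q̃_Z. (All the determinants and traces appearing here are positive reals.) -/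

import Mathlib

open Matrix
open scoped ComplexOrder

-- trace of PSD has nonneg real part
lemma psd_trace_re_nonneg {k : ℕ} {X : Matrix (Fin k) (Fin k) ℂ} (hX : X.PosSemidef) :
    0 ≤ X.trace.re := by
  have h : ∀ i, 0 ≤ (X i i).re := by
    intro i
    have := hX.dotProduct_mulVec_nonneg (Pi.single i 1)
    have hd : dotProduct (star (Pi.single i 1)) (X *ᵥ (Pi.single i 1)) = X i i := by
      simp [dotProduct, mulVec, Pi.single_apply, star, Complex.ext_iff,
        apply_ite Complex.re, apply_ite Complex.im, Finset.sum_ite_eq']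
    rw [hd] at this
    exact (Complex.le_def.mp this).1
  rw [Matrix.trace, Complex.re_sum]
  exact Finset.sum_nonneg fun i _ => h i

-- PD trace/det inequality
lemma pd_log_det_le_trace {k : ℕ} {X : Matrix (Fin k) (Fin k) ℂ} (hX : X.PosDef) :
    (k : ℝ) + Real.log (X.det.re) ≤ X.trace.re := by
  have hH := hX.isHermitian
  have hdet : X.det = ((∏ i, hH.eigenvalues i : ℝ) : ℂ) := by
    rw [hH.det_eq_prod_eigenvalues]; push_cast; rfl
  have htr : X.trace = ((∑ i, hH.eigenvalues i : ℝ) : ℂ) := by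
    calc X.trace = ((hH.eigenvectorUnitary : Matrix (Fin k) (Fin k) ℂ) *
          diagonal (RCLike.ofReal ∘ hH.eigenvalues) *
          (star hH.eigenvectorUnitary : Matrix (Fin k) (Fin k) ℂ)).trace := by
          conv_lhs => rw [hH.spectral_theorem]
          rfl
    _ = ((star hH.eigenvectorUnitary : Matrix (Fin k) (Fin k) ℂ) *
          (hH.eigenvectorUnitary : Matrix (Fin k) (Fin k) ℂ) *
          diagonal (RCLike.ofReal ∘ hH.eigenvalues)).trace := by
          rw [trace_mul_cycle]
    _ = (diagonal (RCLike.ofReal ∘ hH.eigenvalues)).trace := by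
          rw [Unitary.coe_star_mul_self, Matrix.one_mul]
    _ = ((∑ i, hH.eigenvalues i : ℝ) : ℂ) := by
          rw [trace_diagonal]; push_cast; rfl
  rw [hdet, htr]
  simp only [Complex.ofReal_re]
  have hpos : ∀ i ∈ Finset.univ, (0:ℝ) < hH.eigenvalues i := fun i _ => hX.eigenvalues_pos i
  rw [Real.log_prod (fun i hi => (hpos i hi).ne')]
  have : (k : ℝ) = ∑ _i : Fin k, (1:ℝ) := by simp
  rw [this, ← Finset.sum_add_distrib]
  refine Finset.sum_le_sum fun i hi => ?_
  have := Real.log_le_sub_one_of_pos (hpos i hi)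
  linarith

lemma pd_conj {k : ℕ} {R S : Matrix (Fin k) (Fin k) ℂ} (hR : R.PosDef) (hS : S.IsHermitian)
    (hSd : IsUnit S) : (S * R * S).PosDef := by
  rw [posDef_iff_dotProduct_mulVec]
  constructor
  · have := isHermitian_conjTranspose_mul_mul S hR.1
    rwa [hS.eq] at this
  · intro x hx
    have hSx : S *ᵥ x ≠ 0 := by
      intro h
      apply hx
      have hinj := mulVec_injective_iff_isUnit.mpr hSd
      have : S *ᵥ x = S *ᵥ 0 := by simpa using h
      exact hinj this
    have h2 := hR.dotProduct_mulVec_pos hSx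
    have key : dotProduct (star x) ((S * R * S) *ᵥ x) =
        dotProduct (star (S *ᵥ x)) (R *ᵥ (S *ᵥ x)) := by
      conv_lhs => rw [show S * R * S = Sᴴ * R * S by rw [hS.eq]]
      simp only [star_mulVec, dotProduct_mulVec, vecMul_vecMul]
    rwa [key]

-- inner branch as standalone lemma for development
open scoped MatrixOrder in
lemma inner_ineq {m n : ℕ}
    (Q : Matrix (Fin m) (Fin m) ℂ) (hQ : Q.PosDef)
    (QZt : Matrix (Fin n) (Fin n) ℂ) (hQZt : QZt.PosDef)
    (Ht : Matrix (Fin n) (Fin m) ℂ)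
    (H : Matrix (Fin n) (Fin m) ℂ) (QZ : Matrix (Fin n) (Fin n) ℂ) (hQZ : QZ.PosDef) :
      Real.log (((1 : Matrix (Fin n) (Fin n) ℂ) + QZ⁻¹ * (H * Q * H.conjTranspose)).det.re)
        + (((QZt + Ht * Q * Ht.conjTranspose) * (QZ + H * Q * H.conjTranspose)⁻¹).trace).re
        - (((QZt + (Ht - H) * Q * (Ht - H).conjTranspose) * QZ⁻¹).trace).re
      ≤ Real.log
          (((1 : Matrix (Fin n) (Fin n) ℂ) + QZt⁻¹ * (Ht * Q * Ht.conjTranspose)).det.re) := by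
  set A := QZ + H * Q * Hᴴ with hAdef
  set B := QZt + Ht * Q * Htᴴ with hBdef
  set C := QZt + (Ht - H) * Q * (Ht - H)ᴴ with hCdef
  have hA : A.PosDef := hQZ.add_posSemidef (hQ.posSemidef.mul_mul_conjTranspose_same H)
  have hB : B.PosDef := hQZt.add_posSemidef (hQ.posSemidef.mul_mul_conjTranspose_same Ht)
  set W := QZ⁻¹ with hWdef
  set Wt := QZt⁻¹ with hWtdef
  set Ai := A⁻¹ with hAidef
  set Bi := B⁻¹ with hBidef
  set Qi := Q⁻¹ with hQidef
  -- units
  have uQ : IsUnit Q.det := hQ.det_pos.ne'.isUnit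
  have uQZ : IsUnit QZ.det := hQZ.det_pos.ne'.isUnit
  have uQZt : IsUnit QZt.det := hQZt.det_pos.ne'.isUnit
  have uA : IsUnit A.det := hA.det_pos.ne'.isUnit
  have uB : IsUnit B.det := hB.det_pos.ne'.isUnit
  -- collapse rules
  have hQiQ : Qi * Q = 1 := Matrix.nonsing_inv_mul _ uQ
  have hWQZ0 : W * QZ = 1 := Matrix.nonsing_inv_mul _ uQZ
  have hQZW0 : QZ * W = 1 := Matrix.mul_nonsing_inv _ uQZ
  have hAiA0 : Ai * A = 1 := Matrix.nonsing_inv_mul _ uA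
  have hAAi0 : A * Ai = 1 := Matrix.mul_nonsing_inv _ uA
  have hBiB0 : Bi * B = 1 := Matrix.nonsing_inv_mul _ uB
  have hBBi0 : B * Bi = 1 := Matrix.mul_nonsing_inv _ uB
  have hWtQZt0 : Wt * QZt = 1 := Matrix.nonsing_inv_mul _ uQZt
  have hQiQX : ∀ {k : ℕ} (X : Matrix (Fin m) (Fin k) ℂ), Qi * (Q * X) = X := by
    intro k X; rw [← Matrix.mul_assoc, hQiQ, Matrix.one_mul]
  have hWQZX : ∀ {k : ℕ} (X : Matrix (Fin n) (Fin k) ℂ), W * (QZ * X) = X := by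
    intro k X; rw [← Matrix.mul_assoc, hWQZ0, Matrix.one_mul]
  have hQZWX : ∀ {k : ℕ} (X : Matrix (Fin n) (Fin k) ℂ), QZ * (W * X) = X := by
    intro k X; rw [← Matrix.mul_assoc, hQZW0, Matrix.one_mul]
  have hBiBX : ∀ {k : ℕ} (X : Matrix (Fin n) (Fin k) ℂ), Bi * (B * X) = X := by
    intro k X; rw [← Matrix.mul_assoc, hBiB0, Matrix.one_mul]
  have hBBiX : ∀ {k : ℕ} (X : Matrix (Fin n) (Fin k) ℂ), B * (Bi * X) = X := by
    intro k X; rw [← Matrix.mul_assoc, hBBi0, Matrix.one_mul]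
  have hWtQZtX : ∀ {k : ℕ} (X : Matrix (Fin n) (Fin k) ℂ), Wt * (QZt * X) = X := by
    intro k X; rw [← Matrix.mul_assoc, hWtQZt0, Matrix.one_mul]
  -- derived rules
  have hAiD0 : Ai * (H * Q * Hᴴ) = 1 - Ai * QZ := by
    have h := hAiA0
    rw [hAdef, Matrix.mul_add] at h
    exact eq_sub_of_add_eq' h
  have hDAi0 : (H * Q * Hᴴ) * Ai = 1 - QZ * Ai := by
    have h := hAAi0
    rw [hAdef, Matrix.add_mul] at h
    exact eq_sub_of_add_eq' h
  have hDtBi0 : (Ht * Q * Htᴴ) * Bi = 1 - QZt * Bi := by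
    have h := hBBi0
    rw [hBdef, Matrix.add_mul] at h
    exact eq_sub_of_add_eq' h
  have hDAiX : ∀ {k : ℕ} (X : Matrix (Fin n) (Fin k) ℂ),
      H * (Q * (Hᴴ * (Ai * X))) = X - QZ * (Ai * X) := by
    intro k X
    have h := congrArg (· * X) hDAi0
    simpa only [Matrix.sub_mul, Matrix.one_mul, Matrix.mul_assoc] using h
  have hDtBiX : ∀ {k : ℕ} (X : Matrix (Fin n) (Fin k) ℂ),
      Ht * (Q * (Htᴴ * (Bi * X))) = X - QZt * (Bi * X) := by
    intro k X
    have h := congrArg (· * X) hDtBi0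
    simpa only [Matrix.sub_mul, Matrix.one_mul, Matrix.mul_assoc] using h
  have hAiDX : ∀ {k : ℕ} (X : Matrix (Fin n) (Fin k) ℂ),
      H * (Q * (Hᴴ * X)) = A * X - QZ * X := by
    intro k X
    have h : H * Q * Hᴴ = A - QZ := by rw [hAdef]; abel
    rw [← Matrix.sub_mul, ← h, Matrix.mul_assoc, Matrix.mul_assoc]
  -- N, N1, P, K
  set N := Qi + Hᴴ * (W * H) with hNdef
  set N1 := Qi + Htᴴ * (Wt * Ht) with hN1def
  have hN : N.PosDef := by
    have h := (hQZ.inv).posSemidef.conjTranspose_mul_mul_same H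
    rw [Matrix.mul_assoc] at h
    exact hQ.inv.add_posSemidef h
  have hN1 : N1.PosDef := by
    have h := (hQZt.inv).posSemidef.conjTranspose_mul_mul_same Ht
    rw [Matrix.mul_assoc] at h
    exact hQ.inv.add_posSemidef h
  set P := Q - Q * (Htᴴ * (Bi * (Ht * Q))) with hPdef
  set K := Q * ((Htᴴ * Bi - Hᴴ * Ai) * (B * ((Bi * Ht - Ai * H) * Q))) with hKdef
  -- Woodbury: N1 * P = 1
  have hN1P : N1 * P = 1 := by
    simp only [hN1def, hPdef, Matrix.mul_sub, Matrix.add_mul, Matrix.mul_add, Matrix.sub_mul,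
      Matrix.mul_assoc, hQiQX, hQiQ, hDtBiX, hWtQZtX]
    abel
  have hPpd : P.PosDef := by
    have : N1⁻¹ = P := Matrix.inv_eq_right_inv hN1P
    rw [← this]; exact hN1.inv
  have hKpsd : K.PosSemidef := by
    have hKeq : K = (Q * (Htᴴ * Bi - Hᴴ * Ai)) * B * (Q * (Htᴴ * Bi - Hᴴ * Ai))ᴴ := by
      simp only [hKdef, conjTranspose_mul, conjTranspose_sub, conjTranspose_conjTranspose,
        hAidef, hBidef, (hA.inv).isHermitian.eq, (hB.inv).isHermitian.eq, hQ.isHermitian.eq,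
        Matrix.mul_assoc]
    rw [hKeq]
    exact hB.posSemidef.mul_mul_conjTranspose_same _
  -- normalized versions of derived rules
  have hAiD0n : Ai * (H * (Q * Hᴴ)) = 1 - Ai * QZ := by
    simpa only [Matrix.mul_assoc] using hAiD0
  -- cyclic trace helper
  have cyc1 : ∀ {a b : ℕ} (U : Matrix (Fin a) (Fin b) ℂ) (V : Matrix (Fin b) (Fin a) ℂ),
      (U * V).trace = (V * U).trace := fun U V => trace_mul_comm U V
  -- expansions
  have hNP_exp : N * P = 1 - Htᴴ * (Bi * (Ht * Q)) + Hᴴ * (W * (H * Q))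
      - Hᴴ * (W * (H * (Q * (Htᴴ * (Bi * (Ht * Q)))))) := by
    simp only [hNdef, hPdef, Matrix.mul_sub, Matrix.add_mul, Matrix.mul_add, Matrix.sub_mul,
      Matrix.mul_assoc, hQiQX, hQiQ]
    abel
  have hNK_exp : N * K = Htᴴ * (Bi * (Ht * Q)) - Htᴴ * (Ai * (H * Q)) - Hᴴ * (Ai * (Ht * Q))
      + Hᴴ * (Ai * (B * (Ai * (H * Q))))
      + Hᴴ * (W * (H * (Q * (Htᴴ * (Bi * (Ht * Q))))))
      - Hᴴ * (W * (H * (Q * (Htᴴ * (Ai * (H * Q))))))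
      - Hᴴ * (W * (H * (Q * (Hᴴ * (Ai * (Ht * Q))))))
      + Hᴴ * (W * (H * (Q * (Hᴴ * (Ai * (B * (Ai * (H * Q)))))))) := by
    simp only [hNdef, hKdef, Matrix.mul_sub, Matrix.sub_mul, Matrix.mul_add, Matrix.add_mul,
      Matrix.mul_assoc, hQiQX, hBiBX, hBBiX]
    abel
  have hCW_exp : C * W = QZt * W + Ht * (Q * (Htᴴ * W)) - Ht * (Q * (Hᴴ * W))
      - H * (Q * (Htᴴ * W)) + H * (Q * (Hᴴ * W)) := by
    simp only [hCdef, conjTranspose_sub, Matrix.sub_mul, Matrix.mul_sub, Matrix.add_mul,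
      Matrix.mul_add, Matrix.mul_assoc]
    abel
  -- monomial trace reductions
  have c2 : (Ht * (Q * (Htᴴ * W))).trace = (W * (Ht * (Q * Htᴴ))).trace := by
    rw [show Ht * (Q * (Htᴴ * W)) = (Ht * (Q * Htᴴ)) * W from by simp only [Matrix.mul_assoc],
      cyc1]
  have c3 : (Ht * (Q * (Hᴴ * W))).trace = (W * (Ht * (Q * Hᴴ))).trace := by
    rw [show Ht * (Q * (Hᴴ * W)) = (Ht * (Q * Hᴴ)) * W from by simp only [Matrix.mul_assoc], cyc1]
  have c4 : (H * (Q * (Htᴴ * W))).trace = (W * (H * (Q * Htᴴ))).trace := by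
    rw [show H * (Q * (Htᴴ * W)) = (H * (Q * Htᴴ)) * W from by simp only [Matrix.mul_assoc], cyc1]
  have c5 : (H * (Q * (Hᴴ * W))).trace = (W * (H * (Q * Hᴴ))).trace := by
    rw [show H * (Q * (Hᴴ * W)) = (H * (Q * Hᴴ)) * W from by simp only [Matrix.mul_assoc], cyc1]
  have r2 : (Hᴴ * (W * (H * Q))).trace = (W * (H * (Q * Hᴴ))).trace := by
    rw [cyc1]; congr 1; simp only [Matrix.mul_assoc]
  have r7 : (Htᴴ * (Ai * (H * Q))).trace = (Ai * (H * (Q * Htᴴ))).trace := by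
    rw [cyc1]; congr 1; simp only [Matrix.mul_assoc]
  have r8 : (Hᴴ * (Ai * (Ht * Q))).trace = (Ai * (Ht * (Q * Hᴴ))).trace := by
    rw [cyc1]; congr 1; simp only [Matrix.mul_assoc]
  have r3 : (Hᴴ * (Ai * (B * (Ai * (H * Q))))).trace
      = (Ai * (B * (Ai * (H * (Q * Hᴴ))))).trace := by
    rw [cyc1]; congr 1; simp only [Matrix.mul_assoc]
  have r4a : (W * (H * (Q * (Htᴴ * (Ai * QZ))))).trace = (Ai * (H * (Q * Htᴴ))).trace := by
    rw [cyc1]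
    rw [show H * (Q * (Htᴴ * (Ai * QZ))) * W = H * (Q * (Htᴴ * Ai)) from by
      simp only [Matrix.mul_assoc, hQZW0, Matrix.mul_one]]
    rw [show H * (Q * (Htᴴ * Ai)) = (H * (Q * Htᴴ)) * Ai from by simp only [Matrix.mul_assoc],
      cyc1]
  have r4 : (Hᴴ * (W * (H * (Q * (Htᴴ * (Ai * (H * Q))))))).trace
      = (W * (H * (Q * Htᴴ))).trace - (Ai * (H * (Q * Htᴴ))).trace := by
    rw [cyc1]
    rw [show W * (H * (Q * (Htᴴ * (Ai * (H * Q))))) * Hᴴ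
        = W * (H * (Q * (Htᴴ * (Ai * (H * (Q * Hᴴ)))))) from by simp only [Matrix.mul_assoc]]
    rw [hAiD0n]
    simp only [Matrix.mul_sub, Matrix.mul_one, trace_sub]
    rw [r4a]
  have r5 : (Hᴴ * (W * (H * (Q * (Hᴴ * (Ai * (Ht * Q))))))).trace
      = (W * (Ht * (Q * Hᴴ))).trace - (Ai * (Ht * (Q * Hᴴ))).trace := by
    rw [cyc1]
    rw [show W * (H * (Q * (Hᴴ * (Ai * (Ht * Q))))) * Hᴴ
        = W * (H * (Q * (Hᴴ * (Ai * (Ht * (Q * Hᴴ)))))) from by simp only [Matrix.mul_assoc]]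
    rw [hDAiX (Ht * (Q * Hᴴ))]
    simp only [Matrix.mul_sub, trace_sub, hWQZX]
  have r6b : (W * (B * (Ai * QZ))).trace = (B * Ai).trace := by
    rw [cyc1]
    rw [show B * (Ai * QZ) * W = B * Ai from by
      simp only [Matrix.mul_assoc, hQZW0, Matrix.mul_one]]
  have r6a : (W * (B * (Ai * (H * (Q * Hᴴ))))).trace
      = (W * QZt).trace + (W * (Ht * (Q * Htᴴ))).trace - (B * Ai).trace := by
    rw [hAiD0n]
    simp only [Matrix.mul_sub, Matrix.mul_one, trace_sub]
    rw [r6b]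
    rw [show W * B = W * QZt + W * (Ht * (Q * Htᴴ)) from by
      rw [hBdef]; simp only [Matrix.mul_add, Matrix.mul_assoc]]
    rw [trace_add]
  have r6 : (Hᴴ * (W * (H * (Q * (Hᴴ * (Ai * (B * (Ai * (H * Q))))))))).trace
      = (W * QZt).trace + (W * (Ht * (Q * Htᴴ))).trace - (B * Ai).trace
        - (Ai * (B * (Ai * (H * (Q * Hᴴ))))).trace := by
    rw [cyc1]
    rw [show W * (H * (Q * (Hᴴ * (Ai * (B * (Ai * (H * Q))))))) * Hᴴ
        = W * (H * (Q * (Hᴴ * (Ai * (B * (Ai * (H * (Q * Hᴴ)))))))) from by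
      simp only [Matrix.mul_assoc]]
    rw [hDAiX (B * (Ai * (H * (Q * Hᴴ))))]
    simp only [Matrix.mul_sub, trace_sub, hWQZX]
    rw [r6a]
  -- the key trace identity
  have star_eq : (C * W).trace - (B * Ai).trace = (N * P).trace - (m : ℂ) + (N * K).trace := by
    rw [hCW_exp, hNP_exp, hNK_exp]
    simp only [trace_add, trace_sub, trace_one, Fintype.card_fin]
    rw [trace_mul_comm QZt W, c2, c3, c4, c5, r2, r7, r8, r3, r4, r5, r6]
    ring
  -- square root of N
  set S := CFC.sqrt N with hSdef
  have hSS : S * S = N := CFC.sqrt_mul_sqrt_self N hN.posSemidef.nonneg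
  have hSherm : S.IsHermitian := (CFC.sqrt_nonneg N).posSemidef.isHermitian
  have uS : IsUnit S := by
    have : IsUnit S.det := by
      have h : S.det * S.det = N.det := by rw [← Matrix.det_mul, hSS]
      have : S.det ≠ 0 := by
        intro h0
        rw [h0, mul_zero] at h
        exact hN.det_pos.ne' h.symm
      exact this.isUnit
    exact (Matrix.isUnit_iff_isUnit_det _).mpr this
  set X := S * P * S with hXdef
  have hXpd : X.PosDef := pd_conj hPpd hSherm uS
  have hXtrace : X.trace = (N * P).trace := by
    rw [hXdef, trace_mul_cycle, hSS]
  have hXdet : X.det = N.det * P.det := by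
    rw [hXdef, Matrix.det_mul, Matrix.det_mul, mul_comm S.det P.det, mul_assoc, ← Matrix.det_mul,
      hSS, mul_comm]
  have hNKtrace : 0 ≤ (N * K).trace.re := by
    have h : (S * K * S).trace = (N * K).trace := by
      rw [trace_mul_cycle, hSS]
    rw [← h]
    apply psd_trace_re_nonneg
    have := hKpsd.mul_mul_conjTranspose_same S
    rwa [hSherm.eq] at this
  -- determinant identities
  have hdN : N.det * Q.det = ((1 : Matrix (Fin n) (Fin n) ℂ) + W * (H * Q * Hᴴ)).det := by
    have h : N * Q = 1 + Hᴴ * (W * (H * Q)) := by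
      rw [hNdef, Matrix.add_mul, hQiQ, Matrix.mul_assoc, Matrix.mul_assoc]
    rw [← Matrix.det_mul, h, Matrix.det_one_add_mul_comm, Matrix.mul_assoc, Matrix.mul_assoc]
  have hdN1 : N1.det * Q.det = ((1 : Matrix (Fin n) (Fin n) ℂ) + Wt * (Ht * Q * Htᴴ)).det := by
    have h : N1 * Q = 1 + Htᴴ * (Wt * (Ht * Q)) := by
      rw [hN1def, Matrix.add_mul, hQiQ, Matrix.mul_assoc, Matrix.mul_assoc]
    rw [← Matrix.det_mul, h, Matrix.det_one_add_mul_comm, Matrix.mul_assoc, Matrix.mul_assoc]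
  have hdA : QZ.det * ((1 : Matrix (Fin n) (Fin n) ℂ) + W * (H * Q * Hᴴ)).det = A.det := by
    rw [← Matrix.det_mul, Matrix.mul_add, Matrix.mul_one, hQZWX, ← hAdef]
  have hdB : QZt.det * ((1 : Matrix (Fin n) (Fin n) ℂ) + Wt * (Ht * Q * Htᴴ)).det = B.det := by
    have h : QZt * (Wt * (Ht * Q * Htᴴ)) = Ht * Q * Htᴴ := by
      rw [← Matrix.mul_assoc, Matrix.mul_nonsing_inv _ uQZt, Matrix.one_mul]
    rw [← Matrix.det_mul, Matrix.mul_add, Matrix.mul_one, h, ← hBdef]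
  have hdP : N1.det * P.det = 1 := by rw [← Matrix.det_mul, hN1P, Matrix.det_one]
  -- pass to real numbers
  have toReal : ∀ (z : ℂ), 0 < z → z = (z.re : ℂ) ∧ 0 < z.re := by
    intro z hz
    rw [Complex.lt_def] at hz
    obtain ⟨h1, h2⟩ := hz
    refine ⟨?_, by simpa using h1⟩
    apply Complex.ext <;> simp [← h2]
  obtain ⟨cQ, pQ⟩ := toReal _ hQ.det_pos
  obtain ⟨cN, pN⟩ := toReal _ hN.det_pos
  obtain ⟨cN1, pN1⟩ := toReal _ hN1.det_pos
  obtain ⟨cP, pP⟩ := toReal _ hPpd.det_pos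
  obtain ⟨cX, pX⟩ := toReal _ hXpd.det_pos
  -- real det identities
  have e3r : N.det.re * Q.det.re = ((1 : Matrix (Fin n) (Fin n) ℂ) + W * (H * Q * Hᴴ)).det.re := by
    have h := hdN
    rw [cN, cQ] at h
    have := congrArg Complex.re h
    simpa using this
  have e4r : N1.det.re * Q.det.re
      = ((1 : Matrix (Fin n) (Fin n) ℂ) + Wt * (Ht * Q * Htᴴ)).det.re := by
    have h := hdN1
    rw [cN1, cQ] at h
    have := congrArg Complex.re h
    simpa using this
  have e5r : N1.det.re * P.det.re = 1 := by
    have h := hdP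
    rw [cN1, cP] at h
    have := congrArg Complex.re h
    simpa using this
  have e6r : X.det.re = N.det.re * P.det.re := by
    have h := hXdet
    rw [cN, cP] at h
    have := congrArg Complex.re h
    simpa using this
  have pd1 : 0 < ((1 : Matrix (Fin n) (Fin n) ℂ) + W * (H * Q * Hᴴ)).det.re := by
    rw [← e3r]; positivity
  have pd2 : 0 < ((1 : Matrix (Fin n) (Fin n) ℂ) + Wt * (Ht * Q * Htᴴ)).det.re := by
    rw [← e4r]; positivity
  -- log identities
  have l3 : Real.log (((1 : Matrix (Fin n) (Fin n) ℂ) + W * (H * Q * Hᴴ)).det.re)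
      = Real.log N.det.re + Real.log Q.det.re := by
    rw [← e3r, Real.log_mul pN.ne' pQ.ne']
  have l4 : Real.log (((1 : Matrix (Fin n) (Fin n) ℂ) + Wt * (Ht * Q * Htᴴ)).det.re)
      = Real.log N1.det.re + Real.log Q.det.re := by
    rw [← e4r, Real.log_mul pN1.ne' pQ.ne']
  have l5 : Real.log N1.det.re + Real.log P.det.re = 0 := by
    rw [← Real.log_mul pN1.ne' pP.ne', e5r, Real.log_one]
  have l6 : Real.log X.det.re = Real.log N.det.re + Real.log P.det.re := by
    rw [e6r, Real.log_mul pN.ne' pP.ne']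
  -- the key inequality from eigenvalues
  have key1 : (m : ℝ) + Real.log X.det.re ≤ (N * P).trace.re := by
    have h := pd_log_det_le_trace hXpd
    rwa [hXtrace] at h
  -- real part of star identity
  have hre := congrArg Complex.re star_eq
  simp only [Complex.sub_re, Complex.add_re, Complex.natCast_re] at hre
  linarith [key1, hNKtrace, hre, l3, l4, l5, l6]

theorem stmt5 {m n : ℕ} (hm : 1 ≤ m) (hn : 1 ≤ n)
    (Q : Matrix (Fin m) (Fin m) ℂ) (hQ : Q.PosDef)
    (QZt : Matrix (Fin n) (Fin n) ℂ) (hQZt : QZt.PosDef)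
    (Ht : Matrix (Fin n) (Fin m) ℂ) :
    (∀ (H : Matrix (Fin n) (Fin m) ℂ) (QZ : Matrix (Fin n) (Fin n) ℂ), QZ.PosDef →
      Real.log (((1 : Matrix (Fin n) (Fin n) ℂ) + QZ⁻¹ * (H * Q * H.conjTranspose)).det.re)
        + (((QZt + Ht * Q * Ht.conjTranspose) * (QZ + H * Q * H.conjTranspose)⁻¹).trace).re
        - (((QZt + (Ht - H) * Q * (Ht - H).conjTranspose) * QZ⁻¹).trace).re
      ≤ Real.log
          (((1 : Matrix (Fin n) (Fin n) ℂ) + QZt⁻¹ * (Ht * Q * Ht.conjTranspose)).det.re)) ∧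
    (Real.log (((1 : Matrix (Fin n) (Fin n) ℂ) + QZt⁻¹ * (Ht * Q * Ht.conjTranspose)).det.re)
        + (((QZt + Ht * Q * Ht.conjTranspose) * (QZt + Ht * Q * Ht.conjTranspose)⁻¹).trace).re
        - (((QZt + (Ht - Ht) * Q * (Ht - Ht).conjTranspose) * QZt⁻¹).trace).re
      = Real.log
          (((1 : Matrix (Fin n) (Fin n) ℂ) + QZt⁻¹ * (Ht * Q * Ht.conjTranspose)).det.re)) := by
  have uQ : IsUnit Q.det := hQ.det_pos.ne'.isUnit
  have uQZt : IsUnit QZt.det := hQZt.det_pos.ne'.isUnit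
  have hBt : (QZt + Ht * Q * Htᴴ).PosDef :=
    hQZt.add_posSemidef (hQ.posSemidef.mul_mul_conjTranspose_same Ht)
  have uBt : IsUnit (QZt + Ht * Q * Htᴴ).det := hBt.det_pos.ne'.isUnit
  constructor
  · intro H QZ hQZ
    exact inner_ineq Q hQ QZt hQZt Ht H QZ hQZ
  · have h1 : (QZt + Ht * Q * Htᴴ) * (QZt + Ht * Q * Htᴴ)⁻¹ = 1 := Matrix.mul_nonsing_inv _ uBt
    have h2 : QZt * QZt⁻¹ = 1 := Matrix.mul_nonsing_inv _ uQZt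
    simp only [sub_self, Matrix.zero_mul, Matrix.mul_zero, add_zero, h1, h2, trace_one]
    simp
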